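/- In a Euclidean Hurwitz algebra, if u, v are orthonormal vectors orthogonal to 1 and k = u·v, then u·(v·k) = -1, k·(v·u) = 1, and v·(k·u) = -1 (where 1 is the unit element). -/

import Mathlib

theorem stmt_16 {A : Type*} [NormedAddCommGroup A] [InnerProductSpace ℝ A]
    (mul : A →ₗ[ℝ] A →ₗ[ℝ] A) (e : A) (he : ‖e‖ = 1)
    (hul : ∀ x, mul e x = x) (hur : ∀ x, mul x e = x)
    (hmon : ∀ x y, ‖mul x y‖ = ‖x‖ * ‖y‖)
    (u v k : A) (hu : ‖u‖ = 1) (hv : ‖v‖ = 1)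
    (hue : (inner ℝ u e : ℝ) = 0) (hve : (inner ℝ v e : ℝ) = 0)
    (huv : (inner ℝ u v : ℝ) = 0) (hk : k = mul u v) :
    mul u (mul v k) = -e ∧ mul k (mul v u) = e ∧ mul v (mul k u) = -e := by
  have ie : (inner ℝ e e : ℝ) = 1 := by
    rw [real_inner_self_eq_norm_mul_norm, he]; norm_num
  have iu : (inner ℝ u u : ℝ) = 1 := by
    rw [real_inner_self_eq_norm_mul_norm, hu]; norm_num
  have iv : (inner ℝ v v : ℝ) = 1 := by
    rw [real_inner_self_eq_norm_mul_norm, hv]; norm_num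
  have base : ∀ x y : A, (inner ℝ (mul x y) (mul x y) : ℝ) = inner ℝ x x * inner ℝ y y := by
    intro x y
    rw [real_inner_self_eq_norm_mul_norm, real_inner_self_eq_norm_mul_norm,
      real_inner_self_eq_norm_mul_norm, hmon]
    ring
  have L1 : ∀ a c y : A, (inner ℝ (mul a y) (mul c y) : ℝ) = inner ℝ a c * inner ℝ y y := by
    intro a c y
    have h := base (a + c) y
    simp only [map_add, LinearMap.add_apply, real_inner_add_add_self] at h
    have h1 := base a y
    have h2 := base c y
    linear_combination (h - h1 - h2) / 2
  have L2 : ∀ x a b : A, (inner ℝ (mul x a) (mul x b) : ℝ) = inner ℝ a b * inner ℝ x x := by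
    intro x a b
    have h := base x (a + b)
    simp only [map_add, real_inner_add_add_self] at h
    have h1 := base x a
    have h2 := base x b
    linear_combination (h - h1 - h2) / 2
  have P : ∀ a c y w : A,
      (inner ℝ (mul a y) (mul c w) : ℝ) + inner ℝ (mul a w) (mul c y) = 2 * inner ℝ a c * inner ℝ y w := by
    intro a c y w
    have h := L1 a c (y + w)
    simp only [map_add, real_inner_add_add_self] at h
    simp only [inner_add_left, inner_add_right] at h
    have h1 := L1 a c y
    have h2 := L1 a c w
    linear_combination h - h1 - h2
  have sq : ∀ w : A, (inner ℝ w e : ℝ) = 0 → (inner ℝ w w : ℝ) = 1 → mul w w = -e := by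
    intro w hwe hww
    apply ext_inner_right ℝ
    intro x
    have h1 := P w e w x
    rw [hul, hul] at h1
    simp only [hwe, mul_zero, zero_mul] at h1
    have h2 := L2 w x e
    rw [hur, hww, mul_one] at h2
    rw [inner_neg_left]
    linear_combination h1 - h2 + real_inner_comm x e
  have hke : (inner ℝ k e : ℝ) = 0 := by
    have h := P u e v e
    rw [hur, hur, hul] at h
    rw [hk]
    linear_combination h - huv + 2 * (inner ℝ v e : ℝ) * hue
  have ikk : (inner ℝ k k : ℝ) = 1 := by
    rw [real_inner_self_eq_norm_mul_norm, hk, hmon, hu, hv]; norm_num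
  have hku2 : (inner ℝ k u : ℝ) = 0 := by
    have h := L2 u v e
    rw [hur] at h
    rw [hk]
    linear_combination h + (inner ℝ u u : ℝ) * hve
  have hvv : mul v v = -e := sq v hve iv
  have huu : mul u u = -e := sq u hue iu
  have hkk : mul k k = -e := sq k hke ikk
  -- mul v u = -k
  have hvu : mul v u = -k := by
    apply ext_inner_right ℝ
    intro x
    have hvu0 : (inner ℝ v u : ℝ) = 0 := by rw [real_inner_comm]; exact huv
    have h1 := P v e u x
    rw [hul, hul] at h1
    simp only [hve, mul_zero, zero_mul] at h1
    have h2 := P v u x e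
    rw [hur, hur] at h2
    simp only [hvu0, mul_zero, zero_mul] at h2
    have h3 := P u e v x
    rw [hul, hul] at h3
    simp only [hue, mul_zero, zero_mul] at h3
    rw [inner_neg_left, hk]
    linear_combination h1 - h2 + h3 + real_inner_comm (mul u x) v
  -- mul v k = u
  have hvk : mul v k = u := by
    apply ext_inner_right ℝ
    intro x
    have hvu0 : (inner ℝ v u : ℝ) = 0 := by rw [real_inner_comm]; exact huv
    have h1 := P v e k x
    rw [hul, hul] at h1
    simp only [hve, mul_zero, zero_mul] at h1
    have h2 := P v u x v
    rw [hvv, inner_neg_left] at h2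
    simp only [hvu0, mul_zero, zero_mul] at h2
    have h3 := P u e x e
    rw [hur, hul, hur] at h3
    simp only [hue, mul_zero, zero_mul] at h3
    have h4 : (inner ℝ (mul v x) k : ℝ) = inner ℝ (mul v x) (mul u v) := by rw [hk]
    linear_combination h1 - h4 - h2 - h3 - real_inner_comm (mul u x) e
  -- mul k u = v
  have hku : mul k u = v := by
    apply ext_inner_right ℝ
    intro x
    have h1 := P k e u x
    rw [hul, hul] at h1
    simp only [hke, mul_zero, zero_mul] at h1
    have h2 := P k u x e
    rw [hur, hur] at h2
    simp only [hku2, mul_zero, zero_mul] at h2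
    have h3 : (inner ℝ k (mul u x) : ℝ) = inner ℝ v x := by
      have := L2 u v x
      rw [hk]
      linear_combination this + (inner ℝ v x : ℝ) * iu
    linear_combination h1 - h2 + h3
  refine ⟨?_, ?_, ?_⟩
  · rw [hvk, huu]
  · rw [hvu, map_neg, hkk]; simp
  · rw [hku, hvv]
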